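/- In the A∞-category 𝒜 of the 4-punctured sphere, μ₄(u,u,u,u) = 1 and μ₄(v,v,v,v) = 1 (the identity morphisms of the corresponding objects), and μ_k(u,…,u) = 0 = μ_k(v,…,v) for all k ≠ 4 with k ≥ 2. -/

import Mathlib

/-!
**Statement 14.** In the A∞-category `𝒜` of the 4-punctured sphere,
`μ₄(u,u,u,u) = 1` and `μ₄(v,v,v,v) = 1` (the identity morphisms of the corresponding
objects), and `μ_k(u,…,u) = 0 = μ_k(v,…,v)` for all `k ≠ 4` with `k ≥ 2`.

The category `𝒜` is encoded as in statement 13 (basis morphisms `B 4`, binary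
composition `mu2`, and `IsMu 4 mu` expressing that `mu` is the family of
A∞-operations given by the recursive definition).  Here `u` stands for the sequence
of composable morphisms `u_{i,i+1}` and likewise for `v`.
-/

namespace FukayaSphere

inductive B (n : ℕ) : Type
  | endo : ZMod n → ℤ → B n
  | uu : ZMod n → ℕ → B n
  | vv : ZMod n → ℕ → B n
deriving DecidableEq

variable {n : ℕ}

def srcB : B n → ZMod n
  | .endo i _ => i
  | .uu i _ => i
  | .vv i _ => i

def tgtB : B n → ZMod n
  | .endo i _ => i
  | .uu i _ => i + 1
  | .vv i _ => i - 1

/-- binary composition, in diagrammatic order; `none` encodes the zero morphism. -/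
def mu2 : B n → B n → Option (B n)
  | .endo i a, .endo j b => if j = i ∧ 0 ≤ a * b then some (.endo i (a + b)) else none
  | .endo i a, .uu j k => if j = i ∧ a ≤ 0 then some (.uu i (k + a.natAbs)) else none
  | .endo i a, .vv j k => if j = i ∧ 0 ≤ a then some (.vv i (k + a.natAbs)) else none
  | .uu i k, .endo j b => if j = i + 1 ∧ 0 ≤ b then some (.uu i (k + b.natAbs)) else none
  | .uu i k, .vv j l => if j = i + 1 then some (.endo i (-(k + l + 1 : ℤ))) else none
  | .uu _ _, .uu _ _ => none
  | .vv i k, .endo j b => if j = i - 1 ∧ b ≤ 0 then some (.vv i (k + b.natAbs)) else none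
  | .vv i k, .uu j l => if j = i - 1 then some (.endo i ((k : ℤ) + l + 1)) else none
  | .vv _ _, .vv _ _ => none

abbrev H (n : ℕ) := B n →₀ ZMod 2

noncomputable def toH : Option (B n) → H n
  | some b => Finsupp.single b 1
  | none => 0

def uLoop (i : ZMod n) (k : ℕ) : List (B n) :=
  List.ofFn fun t : Fin k => B.uu (i + ((t : ℕ) : ZMod n)) 0

def vLoop (i : ZMod n) (k : ℕ) : List (B n) :=
  List.ofFn fun t : Fin k => B.vv (i - ((t : ℕ) : ZMod n)) 0

structure IsMu (n : ℕ) (mu : List (B n) → Option (B n)) : Prop where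
  binary : ∀ a b : B n, mu [a, b] = mu2 a b
  expand_u : ∀ (pre post : List (B n)) (a b ca cb : B n) (i : ZMod n),
      mu2 a (.uu i 0) = some ca → mu2 (.uu (i - 1) 0) b = some cb →
      mu (pre ++ [ca] ++ uLoop (i + 1) (n - 2) ++ [cb] ++ post)
        = mu (pre ++ [a, b] ++ post)
  expand_v : ∀ (pre post : List (B n)) (a b ca cb : B n) (i : ZMod n),
      mu2 a (.vv i 0) = some ca → mu2 (.vv (i + 1) 0) b = some cb →
      mu (pre ++ [ca] ++ vLoop (i - 1) (n - 2) ++ [cb] ++ post)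
        = mu (pre ++ [a, b] ++ post)
  vanish : ∀ l : List (B n), l.length ≠ 2 → mu l ≠ none →
      ∃ (pre post : List (B n)) (a b ca cb : B n) (i : ZMod n),
        ((mu2 a (.uu i 0) = some ca ∧ mu2 (.uu (i - 1) 0) b = some cb ∧
            l = pre ++ [ca] ++ uLoop (i + 1) (n - 2) ++ [cb] ++ post) ∨
         (mu2 a (.vv i 0) = some ca ∧ mu2 (.vv (i + 1) 0) b = some cb ∧
            l = pre ++ [ca] ++ vLoop (i - 1) (n - 2) ++ [cb] ++ post)) ∧
        mu l = mu (pre ++ [a, b] ++ post)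

end FukayaSphere
namespace FukayaSphere

/-- u-weight -/
def U4 : B 4 → ℕ
  | .endo _ a => a.natAbs
  | .uu _ k => k + 1
  | .vv _ k => k

/-- v-weight -/
def V4 : B 4 → ℕ
  | .endo _ a => a.natAbs
  | .uu _ k => k
  | .vv _ k => k + 1

lemma mu2_U4 {a b c : B 4} (h : mu2 a b = some c) : U4 c = U4 a + U4 b := by
  cases a <;> cases b <;> simp only [mu2] at h <;>
    (try exact absurd h.symm (Option.some_ne_none c)) <;> split_ifs at h with hc <;>
    simp_all only [Option.some.injEq] <;> subst h <;> simp only [U4] <;>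
    try omega
  · rcases mul_nonneg_iff.mp hc.2 with ⟨h1, h2⟩ | ⟨h1, h2⟩ <;> omega

lemma mu2_V4 {a b c : B 4} (h : mu2 a b = some c) : V4 c = V4 a + V4 b := by
  cases a <;> cases b <;> simp only [mu2] at h <;>
    (try exact absurd h.symm (Option.some_ne_none c)) <;> split_ifs at h with hc <;>
    simp_all only [Option.some.injEq] <;> subst h <;> simp only [V4] <;>
    try omega
  · rcases mul_nonneg_iff.mp hc.2 with ⟨h1, h2⟩ | ⟨h1, h2⟩ <;> omega

lemma U4_uu (i : ZMod 4) (k : ℕ) : U4 (B.uu i k) = k + 1 := rfl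
lemma V4_uu (i : ZMod 4) (k : ℕ) : V4 (B.uu i k) = k := rfl
lemma U4_vv (i : ZMod 4) (k : ℕ) : U4 (B.vv i k) = k := rfl
lemma V4_vv (i : ZMod 4) (k : ℕ) : V4 (B.vv i k) = k + 1 := rfl

def sU (l : List (B 4)) : ℕ := (l.map U4).sum
def sV (l : List (B 4)) : ℕ := (l.map V4).sum

lemma sU_append (l l' : List (B 4)) : sU (l ++ l') = sU l + sU l' := by
  simp [sU]
lemma sV_append (l l' : List (B 4)) : sV (l ++ l') = sV l + sV l' := by
  simp [sV]

lemma uLoop_length (i : ZMod 4) (k : ℕ) : (uLoop i k).length = k := by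
  simp [uLoop]
lemma vLoop_length (i : ZMod 4) (k : ℕ) : (vLoop i k).length = k := by
  simp [vLoop]

lemma sU_uLoop (i : ZMod 4) (k : ℕ) : sU (uLoop i k) = k := by
  simp [sU, uLoop, List.map_ofFn, Function.comp, U4, List.sum_ofFn]
lemma sV_uLoop (i : ZMod 4) (k : ℕ) : sV (uLoop i k) = 0 := by
  simp [sV, uLoop, List.map_ofFn, Function.comp, V4, List.sum_ofFn]
lemma sU_vLoop (i : ZMod 4) (k : ℕ) : sU (vLoop i k) = 0 := by
  simp [sU, vLoop, List.map_ofFn, Function.comp, U4, List.sum_ofFn]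
lemma sV_vLoop (i : ZMod 4) (k : ℕ) : sV (vLoop i k) = k := by
  simp [sV, vLoop, List.map_ofFn, Function.comp, V4, List.sum_ofFn]

lemma mu_weight (mu : List (B 4) → Option (B 4)) (hmu : IsMu 4 mu) :
    ∀ (N : ℕ) (l : List (B 4)) (m : B 4), l.length ≤ N → mu l = some m →
      Even l.length ∧ sU l + sV l + 4 = U4 m + V4 m + 2 * l.length := by
  intro N
  induction N with
  | zero =>
    intro l m hlen hm
    have hl2 : l.length ≠ 2 := by omega
    have hne : mu l ≠ none := by rw [hm]; simp
    obtain ⟨pre, post, a, b, ca, cb, i, hcase, heq⟩ := hmu.vanish l hl2 hne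
    rcases hcase with ⟨h1, h2, hl⟩ | ⟨h1, h2, hl⟩ <;> subst hl <;>
      simp [uLoop_length, vLoop_length] at hlen
  | succ N ih =>
    intro l m hlen hm
    by_cases hl2 : l.length = 2
    · obtain ⟨a, b, rfl⟩ := List.length_eq_two.mp hl2
      rw [hmu.binary a b] at hm
      have hU := mu2_U4 hm
      have hV := mu2_V4 hm
      refine ⟨⟨1, rfl⟩, ?_⟩
      simp only [sU, sV, List.map_cons, List.map_nil, List.sum_cons, List.sum_nil,
        List.length_cons, List.length_nil]
      omega
    · have hne : mu l ≠ none := by rw [hm]; simp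
      obtain ⟨pre, post, a, b, ca, cb, i, hcase, heq⟩ := hmu.vanish l hl2 hne
      rw [heq] at hm
      have hlen' : (pre ++ [a, b] ++ post).length ≤ N := by
        rcases hcase with ⟨h1, h2, hl⟩ | ⟨h1, h2, hl⟩ <;> subst hl <;>
          simp only [List.length_append, List.length_cons, List.length_nil,
            uLoop_length, vLoop_length] at hlen ⊢ <;> omega
      obtain ⟨⟨t, ht⟩, hw⟩ := ih (pre ++ [a, b] ++ post) m hlen' hm
      rcases hcase with ⟨h1, h2, hl⟩ | ⟨h1, h2, hl⟩ <;> subst hl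
      · have hUa := mu2_U4 h1; have hUb := mu2_U4 h2
        have hVa := mu2_V4 h1; have hVb := mu2_V4 h2
        simp only [U4_uu, V4_uu, U4_vv, V4_vv] at hUa hUb hVa hVb
        simp only [sU_append, sV_append, List.length_append, uLoop_length,
          sU_uLoop, sV_uLoop, List.length_cons, List.length_nil] at hw ht ⊢
        simp only [sU, sV, List.map_cons, List.map_nil, List.sum_cons,
          List.sum_nil] at hw ⊢
        exact ⟨⟨t + 1, by omega⟩, by omega⟩
      · have hUa := mu2_U4 h1; have hUb := mu2_U4 h2
        have hVa := mu2_V4 h1; have hVb := mu2_V4 h2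
        simp only [U4_uu, V4_uu, U4_vv, V4_vv] at hUa hUb hVa hVb
        simp only [sU_append, sV_append, List.length_append, vLoop_length,
          sU_vLoop, sV_vLoop, List.length_cons, List.length_nil] at hw ht ⊢
        simp only [sU, sV, List.map_cons, List.map_nil, List.sum_cons,
          List.sum_nil] at hw ⊢
        exact ⟨⟨t + 1, by omega⟩, by omega⟩

lemma uLoop_two (i : ZMod 4) : uLoop i 2 = [B.uu i 0, B.uu (i + 1) 0] := by
  simp [uLoop, List.ofFn_succ]

lemma vLoop_two (i : ZMod 4) : vLoop i 2 = [B.vv i 0, B.vv (i - 1) 0] := by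
  simp [vLoop, List.ofFn_succ]

end FukayaSphere

open FukayaSphere in
theorem stmt14 (mu : List (B 4) → Option (B 4)) (hmu : IsMu 4 mu) :
    -- μ₄(u,u,u,u) = 1 and μ₄(v,v,v,v) = 1:
    (∀ i : ZMod 4,
      mu [B.uu i 0, B.uu (i + 1) 0, B.uu (i + 2) 0, B.uu (i + 3) 0]
        = some (B.endo i 0) ∧
      mu [B.vv i 0, B.vv (i - 1) 0, B.vv (i - 2) 0, B.vv (i - 3) 0]
        = some (B.endo i 0)) ∧
    -- μ_k(u,…,u) = 0 = μ_k(v,…,v) for all k ≥ 2 with k ≠ 4: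
    (∀ k : ℕ, 2 ≤ k → k ≠ 4 → ∀ i : ZMod 4,
      mu (uLoop i k) = none ∧ mu (vLoop i k) = none) := by
  have h31 : (i : ZMod 4) → i - 1 = i + 3 := fun i => by
    rw [sub_eq_add_neg, show (-1 : ZMod 4) = 3 from by decide]
  have h13 : (i : ZMod 4) → i + 1 = i - 3 := fun i => by
    rw [sub_eq_add_neg, show (-(3 : ZMod 4)) = 1 from by decide]
  constructor
  · intro i
    constructor
    · have h1 : mu2 (B.endo i 0) (B.uu i 0) = some (B.uu i 0) := by simp [mu2]
      have h2 : mu2 (B.uu (i - 1) 0) (B.endo i 0) = some (B.uu (i - 1) 0) := by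
        simp [mu2]
      have key := hmu.expand_u [] [] (B.endo i 0) (B.endo i 0) (B.uu i 0)
        (B.uu (i - 1) 0) i h1 h2
      have e2 : uLoop (i + 1) (4 - 2) = [B.uu (i + 1) 0, B.uu (i + 2) 0] := by
        rw [show (4 - 2 : ℕ) = 2 from rfl, uLoop_two, add_assoc]
        norm_num
      rw [e2, h31 i] at key
      simp only [List.nil_append, List.append_nil, List.cons_append,
        List.singleton_append] at key
      rw [key, hmu.binary]
      simp [mu2]
    · have h1 : mu2 (B.endo i 0) (B.vv i 0) = some (B.vv i 0) := by simp [mu2]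
      have h2 : mu2 (B.vv (i + 1) 0) (B.endo i 0) = some (B.vv (i + 1) 0) := by
        simp [mu2]
      have key := hmu.expand_v [] [] (B.endo i 0) (B.endo i 0) (B.vv i 0)
        (B.vv (i + 1) 0) i h1 h2
      have e2 : vLoop (i - 1) (4 - 2) = [B.vv (i - 1) 0, B.vv (i - 2) 0] := by
        rw [show (4 - 2 : ℕ) = 2 from rfl, vLoop_two]
        norm_num
        ring
      rw [e2, h13 i] at key
      simp only [List.nil_append, List.append_nil, List.cons_append,
        List.singleton_append] at key
      rw [key, hmu.binary]
      simp [mu2]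
  · intro k hk2 hk4 i
    rcases eq_or_lt_of_le hk2 with h2 | h3
    · constructor
      · rw [← h2, uLoop_two, hmu.binary]; rfl
      · rw [← h2, vLoop_two, hmu.binary]; rfl
    · constructor
      · cases h : mu (uLoop i k) with
        | none => rfl
        | some m =>
          obtain ⟨hev, hw⟩ := mu_weight mu hmu (uLoop i k).length _ m le_rfl h
          rw [uLoop_length] at hev hw
          rw [sU_uLoop, sV_uLoop] at hw
          obtain ⟨t, ht⟩ := hev
          omega
      · cases h : mu (vLoop i k) with
        | none => rfl
        | some m =>
          obtain ⟨hev, hw⟩ := mu_weight mu hmu (vLoop i k).length _ m le_rfl h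
          rw [vLoop_length] at hev hw
          rw [sU_vLoop, sV_vLoop] at hw
          obtain ⟨t, ht⟩ := hev
          omega
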